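/- Let S=((P,T,W),M0) be a Petri net system and let α assign to each place p a positive rational α_p such that α_p·W(t,p)∈ℕ and α_p·W(p,t)∈ℕ for every transition t, and α_p·M0(p)∈ℕ. Let S' be the system obtained from S by replacing, for each place p, the weights W(t,p), W(p,t) and the initial marking M0(p) by α_p·W(t,p), α_p·W(p,t) and α_p·M0(p). Then a sequence σ∈T* is firable from the initial marking of S if and only if it is firable from the initial marking of S'; moreover, if M and M' are the markings reached by firing σ in S and in S' respectively, then the set of places enabled by M equals the set of places enabled by M'. -/

import Mathlib

/-- A labelled transition system with initial state. -/
structure LTS (S L : Type) where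
  tr : S → L → S → Prop
  init : S

namespace LTS

/-- Reachability between states of an LTS (directed paths of arcs). -/
def reach {S L : Type} (A : LTS S L) : S → S → Prop :=
  Relation.ReflTransGen (fun s s' => ∃ t, A.tr s t s')

/-- An LTS is reversible if every state is reachable from the initial state
and the initial state is reachable from every state. -/
def reversible {S L : Type} (A : LTS S L) : Prop :=
  ∀ s : S, A.reach A.init s ∧ A.reach s A.init

end LTS

/-- Isomorphism of labelled transition systems. -/
def ltsIso {S1 S2 L : Type} (A : LTS S1 L) (B : LTS S2 L) : Prop :=
  ∃ ζ : S1 ≃ S2, ζ A.init = B.init ∧ ∀ s t s', A.tr s t s' ↔ B.tr (ζ s) t (ζ s')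

/-- A weighted Petri net with places `P` and transitions `T`:
`pre p t` is the weight of the arc from `p` to `t`, `post t p` of the arc from `t` to `p`. -/
structure PetriNet (P T : Type) where
  pre : P → T → ℕ
  post : T → P → ℕ

namespace PetriNet

variable {P T : Type}

/-- A transition `t` is enabled at marking `M`. -/
def enabled (N : PetriNet P T) (M : P → ℕ) (t : T) : Prop :=
  ∀ p, N.pre p t ≤ M p

/-- A place `p` is enabled by a marking `M`. -/
def placeEnabled (N : PetriNet P T) (M : P → ℕ) (p : P) : Prop :=
  ∀ t, N.pre p t ≤ M p

/-- The marking obtained by firing `t` at `M`. -/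
def fire (N : PetriNet P T) (M : P → ℕ) (t : T) : P → ℕ :=
  fun p => M p - N.pre p t + N.post t p

/-- `M [t⟩ M'`. -/
def step (N : PetriNet P T) (M : P → ℕ) (t : T) (M' : P → ℕ) : Prop :=
  N.enabled M t ∧ M' = N.fire M t

/-- A marking `M'` is reachable from `M` by a finite sequence of firings. -/
def Reach (N : PetriNet P T) (M M' : P → ℕ) : Prop :=
  Relation.ReflTransGen (fun M1 M2 => ∃ t, N.step M1 t M2) M M'

/-- A sequence of transitions is firable from a marking. -/
def firable (N : PetriNet P T) : (P → ℕ) → List T → Prop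
  | _, [] => True
  | M, t :: σ => N.enabled M t ∧ N.firable (N.fire M t) σ

/-- The marking reached after firing a sequence of transitions. -/
def fireSeq (N : PetriNet P T) : (P → ℕ) → List T → (P → ℕ)
  | M, [] => M
  | M, t :: σ => N.fireSeq (N.fire M t) σ

/-- A net is choice-free if every place has at most one output transition. -/
def choiceFree (N : PetriNet P T) : Prop :=
  ∀ p t t', 0 < N.pre p t → 0 < N.pre p t' → t = t'

/-- A weighted marked graph: each place has at most one output and at most one input transition. -/
def wmg (N : PetriNet P T) : Prop :=
  N.choiceFree ∧ ∀ p t t', 0 < N.post t p → 0 < N.post t' p → t = t'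

/-- A net is pure if no place is a side condition of some transition. -/
def isPure (N : PetriNet P T) : Prop :=
  ∀ p t, ¬(0 < N.pre p t ∧ 0 < N.post t p)

/-- Liveness: from every reachable marking, every transition can eventually fire again. -/
def live (N : PetriNet P T) (M0 : P → ℕ) : Prop :=
  ∀ (t : T) (M : P → ℕ), N.Reach M0 M → ∃ M', N.Reach M M' ∧ N.enabled M' t

/-- The reachability graph of a system, as an LTS on the reachable markings. -/
def RG (N : PetriNet P T) (M0 : P → ℕ) : LTS {M : P → ℕ // N.Reach M0 M} T where
  tr := fun M t M' => N.step M.1 t M'.1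
  init := ⟨M0, Relation.ReflTransGen.refl⟩

end PetriNet

/-- A system solves an LTS if its reachability graph is isomorphic to it. -/
def Solves {Pl T S : Type} (N : PetriNet Pl T) (M0 : Pl → ℕ) (A : LTS S T) : Prop :=
  ltsIso (N.RG M0) A

/-- CF-solvability of an LTS. -/
def CFSolvable {S L : Type} (A : LTS S L) : Prop :=
  ∃ (k : ℕ) (N : PetriNet (Fin k) L) (M0 : Fin k → ℕ), N.choiceFree ∧ Solves N M0 A

/-- WMG-solvability of an LTS. -/
def WMGSolvable {S L : Type} (A : LTS S L) : Prop :=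
  ∃ (k : ℕ) (N : PetriNet (Fin k) L) (M0 : Fin k → ℕ), N.wmg ∧ Solves N M0 A

/-- Solvability of an LTS by a pure choice-free system. -/
def PureCFSolvable {S L : Type} (A : LTS S L) : Prop :=
  ∃ (k : ℕ) (N : PetriNet (Fin k) L) (M0 : Fin k → ℕ),
    N.choiceFree ∧ N.isPure ∧ Solves N M0 A

/-- The circular LTS induced by a (nonempty) word `w`. -/
def circLTS {L : Type} (w : List L) (hw : 0 < w.length) : LTS (Fin w.length) L where
  tr := fun s t s' => t = w.get s ∧ s'.val = (s.val + 1) % w.length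
  init := ⟨0, hw⟩

/-- The Parikh vector of a word. -/
def parikh {L : Type} [DecidableEq L] (w : List L) (t : L) : ℕ := w.count t

/-- A vector of naturals is prime if the gcd of its components equals 1. -/
def primeVec {L : Type} [Fintype L] (Υ : L → ℕ) : Prop := Finset.univ.gcd Υ = 1

/-- A word is cyclically solvable by a WMG. -/
def cyclicWMGSolvable {L : Type} (w : List L) : Prop :=
  ∃ (hw : 0 < w.length) (k : ℕ) (N : PetriNet (Fin k) L) (M0 : Fin k → ℕ),
    N.wmg ∧ Solves N M0 (circLTS w hw)

/-- A word is cyclically solvable by a CF net. -/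
def cyclicCFSolvable {L : Type} (w : List L) : Prop :=
  ∃ (hw : 0 < w.length) (k : ℕ) (N : PetriNet (Fin k) L) (M0 : Fin k → ℕ),
    N.choiceFree ∧ Solves N M0 (circLTS w hw)

/-- A circuit net: places `p_0 … p_{k-1}` and transitions `τ 0 … τ (k-1)` arranged in a
single alternating cycle, `τ i` being the unique output of `p_i` and the unique input
of `p_{i+1 mod k}`. -/
def isCircuit {k : ℕ} {L : Type} (hk : 0 < k) (N : PetriNet (Fin k) L) : Prop :=
  ∃ τ : Fin k ≃ L,
    (∀ (i : Fin k) (t : L), 0 < N.pre i t ↔ t = τ i) ∧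
    (∀ (i : Fin k) (t : L), 0 < N.post t i ↔ t = τ ⟨(i.val + k - 1) % k, Nat.mod_lt _ hk⟩)

/-- A word is cyclically solvable by a circuit system. -/
def cyclicCircuitSolvable {L : Type} (v : List L) : Prop :=
  ∃ (hv : 0 < v.length) (k : ℕ) (hk : 0 < k) (N : PetriNet (Fin k) L) (M0 : Fin k → ℕ),
    isCircuit hk N ∧ Solves N M0 (circLTS v hv)

/-- The ordered pair `a b` is circularly adjacent in `w`. -/
def cAdj {L : Type} (w : List L) (a b : L) : Prop :=
  a ≠ b ∧ ((∃ w1 w2, w = w1 ++ a :: b :: w2) ∨ ∃ w3, w = b :: w3 ++ [a])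

/-- The projection of a word on a two-element sub-alphabet, as a word over that sub-alphabet. -/
def projPair {L : Type} [DecidableEq L] (w : List L) (a b : L) :
    List {x : L // x = a ∨ x = b} :=
  w.filterMap (fun x => if h : x = a ∨ x = b then some ⟨x, h⟩ else none)

/-- The Parikh vector `P_jq` of the segment of `w` read circularly from state `s_j`
to state `s_q` (empty when `j = q`). -/
def segParikh {L : Type} [DecidableEq L] (w : List L) (hw : 0 < w.length)
    (j q : Fin w.length) (t : L) : ℕ :=
  ((List.range ((q.val + w.length - j.val) % w.length)).map
    (fun i => w.get ⟨(j.val + i) % w.length, Nat.mod_lt _ hw⟩)).count t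

/-- A region of an LTS. -/
def isRegion {S L : Type} (A : LTS S L) (R : S → ℕ) (B F : L → ℕ) : Prop :=
  ∀ s t s', A.tr s t s' → B t ≤ R s ∧ R s' = R s - B t + F t

/-- `gcd_p`: the gcd of all (nonzero) input and output weights of a place. -/
def gcdPlace {Pl T : Type} [Fintype T] (N : PetriNet Pl T) (p : Pl) : ℕ :=
  Finset.univ.gcd (fun t => Nat.gcd (N.pre p t) (N.post t p))

/-- Conservativeness of a net. -/
def conservative {Pl T : Type} [Fintype Pl] (N : PetriNet Pl T) : Prop :=
  ∃ X : Pl → ℕ, (∀ p, 1 ≤ X p) ∧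
    ∀ t, ∑ p, (X p : ℤ) * ((N.post t p : ℤ) - (N.pre p t : ℤ)) = 0

/-- The P-subnet induced by a family of places. -/
def restrictNet {Pl T : Type} {k : ℕ} (N : PetriNet Pl T) (π : Fin k → Pl) :
    PetriNet (Fin k) T where
  pre := fun i t => N.pre (π i) t
  post := fun t i => N.post t (π i)

section Stmt13Aux

variable {Pl T : Type} {N N' : PetriNet Pl T} {α : Pl → ℚ}

lemma stmt13_le_iff (hα : ∀ p, 0 < α p) {M M' : Pl → ℕ}
    (hM : ∀ p, (M' p : ℚ) = α p * M p) {a a' : Pl → ℕ}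
    (ha : ∀ p, (a' p : ℚ) = α p * a p) (p : Pl) :
    a' p ≤ M' p ↔ a p ≤ M p := by
  rw [← Nat.cast_le (α := ℚ), ← Nat.cast_le (α := ℚ), hM p, ha p]
  exact mul_le_mul_iff_right₀ (hα p)

lemma stmt13_enabled_iff (hα : ∀ p, 0 < α p)
    (hpre : ∀ p t, (N'.pre p t : ℚ) = α p * N.pre p t) {M M' : Pl → ℕ}
    (hM : ∀ p, (M' p : ℚ) = α p * M p) (t : T) :
    N'.enabled M' t ↔ N.enabled M t := by
  unfold PetriNet.enabled
  exact forall_congr' fun p => stmt13_le_iff hα hM (fun q => hpre q t) p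

lemma stmt13_fire (hα : ∀ p, 0 < α p)
    (hpre : ∀ p t, (N'.pre p t : ℚ) = α p * N.pre p t)
    (hpost : ∀ p t, (N'.post t p : ℚ) = α p * N.post t p) {M M' : Pl → ℕ}
    (hM : ∀ p, (M' p : ℚ) = α p * M p) {t : T} (ht : N.enabled M t) (p : Pl) :
    ((N'.fire M' t) p : ℚ) = α p * (N.fire M t) p := by
  have h1 : N.pre p t ≤ M p := ht p
  have h2 : N'.pre p t ≤ M' p := (stmt13_le_iff hα hM (fun q => hpre q t) p).2 h1
  unfold PetriNet.fire
  push_cast [Nat.cast_sub h1, Nat.cast_sub h2]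
  rw [hM p, hpre p t, hpost p t]
  ring

lemma stmt13_main (hα : ∀ p, 0 < α p)
    (hpre : ∀ p t, (N'.pre p t : ℚ) = α p * N.pre p t)
    (hpost : ∀ p t, (N'.post t p : ℚ) = α p * N.post t p)
    (σ : List T) : ∀ (M M' : Pl → ℕ), (∀ p, (M' p : ℚ) = α p * M p) →
    (N.firable M σ ↔ N'.firable M' σ) ∧
    (N.firable M σ → ∀ p, ((N'.fireSeq M' σ) p : ℚ) = α p * (N.fireSeq M σ) p) := by
  induction σ with
  | nil => intro M M' hM; exact ⟨Iff.rfl, fun _ => hM⟩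
  | cons t σ ih =>
    intro M M' hM
    constructor
    · simp only [PetriNet.firable]
      rw [stmt13_enabled_iff hα hpre hM]
      constructor
      · rintro ⟨he, hf⟩
        exact ⟨he, ((ih _ _ (stmt13_fire hα hpre hpost hM he)).1).1 hf⟩
      · rintro ⟨he, hf⟩
        exact ⟨he, ((ih _ _ (stmt13_fire hα hpre hpost hM he)).1).2 hf⟩
    · rintro ⟨he, hf⟩
      exact (ih _ _ (stmt13_fire hα hpre hpost hM he)).2 hf

end Stmt13Aux

/-- scaling a system by positive rationals preserves firable sequences
and the sets of enabled places. -/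
theorem stmt13 {Pl T : Type} (N N' : PetriNet Pl T) (M0 M0' : Pl → ℕ) (α : Pl → ℚ)
    (hα : ∀ p, 0 < α p)
    (hpre : ∀ p t, (N'.pre p t : ℚ) = α p * N.pre p t)
    (hpost : ∀ p t, (N'.post t p : ℚ) = α p * N.post t p)
    (hM0 : ∀ p, (M0' p : ℚ) = α p * M0 p)
    (σ : List T) :
    (N.firable M0 σ ↔ N'.firable M0' σ) ∧
    (N.firable M0 σ →
      ∀ p, (N.placeEnabled (N.fireSeq M0 σ) p ↔ N'.placeEnabled (N'.fireSeq M0' σ) p)) := by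
  refine ⟨(stmt13_main hα hpre hpost σ M0 M0' hM0).1, fun hf p => ?_⟩
  have hM := (stmt13_main hα hpre hpost σ M0 M0' hM0).2 hf
  unfold PetriNet.placeEnabled
  exact forall_congr' fun t => (stmt13_le_iff hα hM (fun q => hpre q t) p).symm
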